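/- The parameterized operator P(c₂, c₄) = I + c₂∑_{pairs}σᵢ·σⱼ + c₄∑_{pairings}(σᵢ·σⱼ)(σₖ·σₗ) on (ℂ²)^⊗4 is, at the AKLT point (c₂, c₄) = (1/3, 1/15), a positive multiple of a projector: P(1/3, 1/15)² = (48/15)·P(1/3, 1/15). -/
import Mathlib

open Matrix

/-- The three Pauli matrices. -/
noncomputable def pauli : Fin 3 → Matrix (Fin 2) (Fin 2) ℂ :=
  ![!![0, 1; 1, 0], !![0, -Complex.I; Complex.I, 0], !![1, 0; 0, -1]]

/-- The operator on (ℂ^d)^⊗n permuting tensor factors according to π: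
it sends `e_{i₁} ⊗ ... ⊗ e_{i_n}` to `e_{i_{π⁻¹(1)}} ⊗ ... ⊗ e_{i_{π⁻¹(n)}}`. -/
noncomputable def permOp (d n : ℕ) (π : Equiv.Perm (Fin n)) :
    Matrix (Fin n → Fin d) (Fin n → Fin d) ℂ :=
  Matrix.of fun f g => if f = g ∘ ⇑π⁻¹ then 1 else 0

/-- The one-site operator acting as the 2×2 matrix `A` on tensor factor `i`
of (ℂ²)^⊗n and as the identity elsewhere. -/
noncomputable def opAt {n : ℕ} (i : Fin n) (A : Matrix (Fin 2) (Fin 2) ℂ) :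
    Matrix (Fin n → Fin 2) (Fin n → Fin 2) ℂ :=
  Matrix.of fun f g => ∏ k, if k = i then A (f k) (g k) else (if f k = g k then 1 else 0)

/-- σᵢ·σⱼ = ∑_{a ∈ {x,y,z}} (σᵃ at leg i)(σᵃ at leg j) on (ℂ²)^⊗n. -/
noncomputable def sdot {n : ℕ} (i j : Fin n) :
    Matrix (Fin n → Fin 2) (Fin n → Fin 2) ℂ :=
  ∑ a : Fin 3, opAt i (pauli a) * opAt j (pauli a)

/-- The parameterized operator P(c₂, c₄) on (ℂ²)^⊗4. -/
noncomputable def Pparam (c2 c4 : ℂ) : Matrix (Fin 4 → Fin 2) (Fin 4 → Fin 2) ℂ :=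
  1 + c2 • (sdot 0 1 + sdot 0 2 + sdot 0 3 + sdot 1 2 + sdot 1 3 + sdot 2 3)
    + c4 • (sdot 0 1 * sdot 2 3 + sdot 0 2 * sdot 1 3 + sdot 0 3 * sdot 1 2)

/-! ### Auxiliary computable (GaussianInt) versions -/

abbrev GI := GaussianInt

def pauliG : Fin 3 → Matrix (Fin 2) (Fin 2) GI :=
  ![!![0, 1; 1, 0], !![0, -⟨0,1⟩; ⟨0,1⟩, 0], !![1, 0; 0, -1]]

def opAtG (i : Fin 4) (A : Matrix (Fin 2) (Fin 2) GI) :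
    Matrix (Fin 4 → Fin 2) (Fin 4 → Fin 2) GI :=
  Matrix.of fun f g => ∏ k, if k = i then A (f k) (g k) else (if f k = g k then 1 else 0)

def sdotG (i j : Fin 4) : Matrix (Fin 4 → Fin 2) (Fin 4 → Fin 2) GI :=
  ∑ a : Fin 3, opAtG i (pauliG a) * opAtG j (pauliG a)

def encE : (Fin 4 → Fin 2) ≃ Fin 16 where
  toFun f := ⟨8 * f 0 + 4 * f 1 + 2 * f 2 + f 3, by omega⟩
  invFun n k := ⟨n / 2 ^ (3 - k.val) % 2, Nat.mod_lt _ (by norm_num)⟩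
  left_inv := by decide
  right_inv := by decide

def toBigG (M : Matrix (Fin 16) (Fin 16) GI) :
    Matrix (Fin 4 → Fin 2) (Fin 4 → Fin 2) GI :=
  M.submatrix encE encE

def OP00 : Matrix (Fin 16) (Fin 16) GI :=
  !![0, 0, 0, 0, 0, 0, 0, 0, 1, 0, 0, 0, 0, 0, 0, 0;
     0, 0, 0, 0, 0, 0, 0, 0, 0, 1, 0, 0, 0, 0, 0, 0;
     0, 0, 0, 0, 0, 0, 0, 0, 0, 0, 1, 0, 0, 0, 0, 0;
     0, 0, 0, 0, 0, 0, 0, 0, 0, 0, 0, 1, 0, 0, 0, 0;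
     0, 0, 0, 0, 0, 0, 0, 0, 0, 0, 0, 0, 1, 0, 0, 0;
     0, 0, 0, 0, 0, 0, 0, 0, 0, 0, 0, 0, 0, 1, 0, 0;
     0, 0, 0, 0, 0, 0, 0, 0, 0, 0, 0, 0, 0, 0, 1, 0;
     0, 0, 0, 0, 0, 0, 0, 0, 0, 0, 0, 0, 0, 0, 0, 1;
     1, 0, 0, 0, 0, 0, 0, 0, 0, 0, 0, 0, 0, 0, 0, 0;
     0, 1, 0, 0, 0, 0, 0, 0, 0, 0, 0, 0, 0, 0, 0, 0;
     0, 0, 1, 0, 0, 0, 0, 0, 0, 0, 0, 0, 0, 0, 0, 0;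
     0, 0, 0, 1, 0, 0, 0, 0, 0, 0, 0, 0, 0, 0, 0, 0;
     0, 0, 0, 0, 1, 0, 0, 0, 0, 0, 0, 0, 0, 0, 0, 0;
     0, 0, 0, 0, 0, 1, 0, 0, 0, 0, 0, 0, 0, 0, 0, 0;
     0, 0, 0, 0, 0, 0, 1, 0, 0, 0, 0, 0, 0, 0, 0, 0;
     0, 0, 0, 0, 0, 0, 0, 1, 0, 0, 0, 0, 0, 0, 0, 0]
def OP01 : Matrix (Fin 16) (Fin 16) GI :=
  !![0, 0, 0, 0, 0, 0, 0, 0, (-⟨0,1⟩:GI), 0, 0, 0, 0, 0, 0, 0;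
     0, 0, 0, 0, 0, 0, 0, 0, 0, (-⟨0,1⟩:GI), 0, 0, 0, 0, 0, 0;
     0, 0, 0, 0, 0, 0, 0, 0, 0, 0, (-⟨0,1⟩:GI), 0, 0, 0, 0, 0;
     0, 0, 0, 0, 0, 0, 0, 0, 0, 0, 0, (-⟨0,1⟩:GI), 0, 0, 0, 0;
     0, 0, 0, 0, 0, 0, 0, 0, 0, 0, 0, 0, (-⟨0,1⟩:GI), 0, 0, 0;
     0, 0, 0, 0, 0, 0, 0, 0, 0, 0, 0, 0, 0, (-⟨0,1⟩:GI), 0, 0;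
     0, 0, 0, 0, 0, 0, 0, 0, 0, 0, 0, 0, 0, 0, (-⟨0,1⟩:GI), 0;
     0, 0, 0, 0, 0, 0, 0, 0, 0, 0, 0, 0, 0, 0, 0, (-⟨0,1⟩:GI);
     (⟨0,1⟩:GI), 0, 0, 0, 0, 0, 0, 0, 0, 0, 0, 0, 0, 0, 0, 0;
     0, (⟨0,1⟩:GI), 0, 0, 0, 0, 0, 0, 0, 0, 0, 0, 0, 0, 0, 0;
     0, 0, (⟨0,1⟩:GI), 0, 0, 0, 0, 0, 0, 0, 0, 0, 0, 0, 0, 0;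
     0, 0, 0, (⟨0,1⟩:GI), 0, 0, 0, 0, 0, 0, 0, 0, 0, 0, 0, 0;
     0, 0, 0, 0, (⟨0,1⟩:GI), 0, 0, 0, 0, 0, 0, 0, 0, 0, 0, 0;
     0, 0, 0, 0, 0, (⟨0,1⟩:GI), 0, 0, 0, 0, 0, 0, 0, 0, 0, 0;
     0, 0, 0, 0, 0, 0, (⟨0,1⟩:GI), 0, 0, 0, 0, 0, 0, 0, 0, 0;
     0, 0, 0, 0, 0, 0, 0, (⟨0,1⟩:GI), 0, 0, 0, 0, 0, 0, 0, 0]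
def OP02 : Matrix (Fin 16) (Fin 16) GI :=
  !![1, 0, 0, 0, 0, 0, 0, 0, 0, 0, 0, 0, 0, 0, 0, 0;
     0, 1, 0, 0, 0, 0, 0, 0, 0, 0, 0, 0, 0, 0, 0, 0;
     0, 0, 1, 0, 0, 0, 0, 0, 0, 0, 0, 0, 0, 0, 0, 0;
     0, 0, 0, 1, 0, 0, 0, 0, 0, 0, 0, 0, 0, 0, 0, 0;
     0, 0, 0, 0, 1, 0, 0, 0, 0, 0, 0, 0, 0, 0, 0, 0;
     0, 0, 0, 0, 0, 1, 0, 0, 0, 0, 0, 0, 0, 0, 0, 0;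
     0, 0, 0, 0, 0, 0, 1, 0, 0, 0, 0, 0, 0, 0, 0, 0;
     0, 0, 0, 0, 0, 0, 0, 1, 0, 0, 0, 0, 0, 0, 0, 0;
     0, 0, 0, 0, 0, 0, 0, 0, -1, 0, 0, 0, 0, 0, 0, 0;
     0, 0, 0, 0, 0, 0, 0, 0, 0, -1, 0, 0, 0, 0, 0, 0;
     0, 0, 0, 0, 0, 0, 0, 0, 0, 0, -1, 0, 0, 0, 0, 0;
     0, 0, 0, 0, 0, 0, 0, 0, 0, 0, 0, -1, 0, 0, 0, 0;
     0, 0, 0, 0, 0, 0, 0, 0, 0, 0, 0, 0, -1, 0, 0, 0;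
     0, 0, 0, 0, 0, 0, 0, 0, 0, 0, 0, 0, 0, -1, 0, 0;
     0, 0, 0, 0, 0, 0, 0, 0, 0, 0, 0, 0, 0, 0, -1, 0;
     0, 0, 0, 0, 0, 0, 0, 0, 0, 0, 0, 0, 0, 0, 0, -1]
def OP10 : Matrix (Fin 16) (Fin 16) GI :=
  !![0, 0, 0, 0, 1, 0, 0, 0, 0, 0, 0, 0, 0, 0, 0, 0;
     0, 0, 0, 0, 0, 1, 0, 0, 0, 0, 0, 0, 0, 0, 0, 0;
     0, 0, 0, 0, 0, 0, 1, 0, 0, 0, 0, 0, 0, 0, 0, 0;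
     0, 0, 0, 0, 0, 0, 0, 1, 0, 0, 0, 0, 0, 0, 0, 0;
     1, 0, 0, 0, 0, 0, 0, 0, 0, 0, 0, 0, 0, 0, 0, 0;
     0, 1, 0, 0, 0, 0, 0, 0, 0, 0, 0, 0, 0, 0, 0, 0;
     0, 0, 1, 0, 0, 0, 0, 0, 0, 0, 0, 0, 0, 0, 0, 0;
     0, 0, 0, 1, 0, 0, 0, 0, 0, 0, 0, 0, 0, 0, 0, 0;
     0, 0, 0, 0, 0, 0, 0, 0, 0, 0, 0, 0, 1, 0, 0, 0;
     0, 0, 0, 0, 0, 0, 0, 0, 0, 0, 0, 0, 0, 1, 0, 0;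
     0, 0, 0, 0, 0, 0, 0, 0, 0, 0, 0, 0, 0, 0, 1, 0;
     0, 0, 0, 0, 0, 0, 0, 0, 0, 0, 0, 0, 0, 0, 0, 1;
     0, 0, 0, 0, 0, 0, 0, 0, 1, 0, 0, 0, 0, 0, 0, 0;
     0, 0, 0, 0, 0, 0, 0, 0, 0, 1, 0, 0, 0, 0, 0, 0;
     0, 0, 0, 0, 0, 0, 0, 0, 0, 0, 1, 0, 0, 0, 0, 0;
     0, 0, 0, 0, 0, 0, 0, 0, 0, 0, 0, 1, 0, 0, 0, 0]
def OP11 : Matrix (Fin 16) (Fin 16) GI :=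
  !![0, 0, 0, 0, (-⟨0,1⟩:GI), 0, 0, 0, 0, 0, 0, 0, 0, 0, 0, 0;
     0, 0, 0, 0, 0, (-⟨0,1⟩:GI), 0, 0, 0, 0, 0, 0, 0, 0, 0, 0;
     0, 0, 0, 0, 0, 0, (-⟨0,1⟩:GI), 0, 0, 0, 0, 0, 0, 0, 0, 0;
     0, 0, 0, 0, 0, 0, 0, (-⟨0,1⟩:GI), 0, 0, 0, 0, 0, 0, 0, 0;
     (⟨0,1⟩:GI), 0, 0, 0, 0, 0, 0, 0, 0, 0, 0, 0, 0, 0, 0, 0;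
     0, (⟨0,1⟩:GI), 0, 0, 0, 0, 0, 0, 0, 0, 0, 0, 0, 0, 0, 0;
     0, 0, (⟨0,1⟩:GI), 0, 0, 0, 0, 0, 0, 0, 0, 0, 0, 0, 0, 0;
     0, 0, 0, (⟨0,1⟩:GI), 0, 0, 0, 0, 0, 0, 0, 0, 0, 0, 0, 0;
     0, 0, 0, 0, 0, 0, 0, 0, 0, 0, 0, 0, (-⟨0,1⟩:GI), 0, 0, 0;
     0, 0, 0, 0, 0, 0, 0, 0, 0, 0, 0, 0, 0, (-⟨0,1⟩:GI), 0, 0;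
     0, 0, 0, 0, 0, 0, 0, 0, 0, 0, 0, 0, 0, 0, (-⟨0,1⟩:GI), 0;
     0, 0, 0, 0, 0, 0, 0, 0, 0, 0, 0, 0, 0, 0, 0, (-⟨0,1⟩:GI);
     0, 0, 0, 0, 0, 0, 0, 0, (⟨0,1⟩:GI), 0, 0, 0, 0, 0, 0, 0;
     0, 0, 0, 0, 0, 0, 0, 0, 0, (⟨0,1⟩:GI), 0, 0, 0, 0, 0, 0;
     0, 0, 0, 0, 0, 0, 0, 0, 0, 0, (⟨0,1⟩:GI), 0, 0, 0, 0, 0;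
     0, 0, 0, 0, 0, 0, 0, 0, 0, 0, 0, (⟨0,1⟩:GI), 0, 0, 0, 0]
def OP12 : Matrix (Fin 16) (Fin 16) GI :=
  !![1, 0, 0, 0, 0, 0, 0, 0, 0, 0, 0, 0, 0, 0, 0, 0;
     0, 1, 0, 0, 0, 0, 0, 0, 0, 0, 0, 0, 0, 0, 0, 0;
     0, 0, 1, 0, 0, 0, 0, 0, 0, 0, 0, 0, 0, 0, 0, 0;
     0, 0, 0, 1, 0, 0, 0, 0, 0, 0, 0, 0, 0, 0, 0, 0;
     0, 0, 0, 0, -1, 0, 0, 0, 0, 0, 0, 0, 0, 0, 0, 0;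
     0, 0, 0, 0, 0, -1, 0, 0, 0, 0, 0, 0, 0, 0, 0, 0;
     0, 0, 0, 0, 0, 0, -1, 0, 0, 0, 0, 0, 0, 0, 0, 0;
     0, 0, 0, 0, 0, 0, 0, -1, 0, 0, 0, 0, 0, 0, 0, 0;
     0, 0, 0, 0, 0, 0, 0, 0, 1, 0, 0, 0, 0, 0, 0, 0;
     0, 0, 0, 0, 0, 0, 0, 0, 0, 1, 0, 0, 0, 0, 0, 0;
     0, 0, 0, 0, 0, 0, 0, 0, 0, 0, 1, 0, 0, 0, 0, 0;
     0, 0, 0, 0, 0, 0, 0, 0, 0, 0, 0, 1, 0, 0, 0, 0;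
     0, 0, 0, 0, 0, 0, 0, 0, 0, 0, 0, 0, -1, 0, 0, 0;
     0, 0, 0, 0, 0, 0, 0, 0, 0, 0, 0, 0, 0, -1, 0, 0;
     0, 0, 0, 0, 0, 0, 0, 0, 0, 0, 0, 0, 0, 0, -1, 0;
     0, 0, 0, 0, 0, 0, 0, 0, 0, 0, 0, 0, 0, 0, 0, -1]
def OP20 : Matrix (Fin 16) (Fin 16) GI :=
  !![0, 0, 1, 0, 0, 0, 0, 0, 0, 0, 0, 0, 0, 0, 0, 0;
     0, 0, 0, 1, 0, 0, 0, 0, 0, 0, 0, 0, 0, 0, 0, 0;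
     1, 0, 0, 0, 0, 0, 0, 0, 0, 0, 0, 0, 0, 0, 0, 0;
     0, 1, 0, 0, 0, 0, 0, 0, 0, 0, 0, 0, 0, 0, 0, 0;
     0, 0, 0, 0, 0, 0, 1, 0, 0, 0, 0, 0, 0, 0, 0, 0;
     0, 0, 0, 0, 0, 0, 0, 1, 0, 0, 0, 0, 0, 0, 0, 0;
     0, 0, 0, 0, 1, 0, 0, 0, 0, 0, 0, 0, 0, 0, 0, 0;
     0, 0, 0, 0, 0, 1, 0, 0, 0, 0, 0, 0, 0, 0, 0, 0;
     0, 0, 0, 0, 0, 0, 0, 0, 0, 0, 1, 0, 0, 0, 0, 0;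
     0, 0, 0, 0, 0, 0, 0, 0, 0, 0, 0, 1, 0, 0, 0, 0;
     0, 0, 0, 0, 0, 0, 0, 0, 1, 0, 0, 0, 0, 0, 0, 0;
     0, 0, 0, 0, 0, 0, 0, 0, 0, 1, 0, 0, 0, 0, 0, 0;
     0, 0, 0, 0, 0, 0, 0, 0, 0, 0, 0, 0, 0, 0, 1, 0;
     0, 0, 0, 0, 0, 0, 0, 0, 0, 0, 0, 0, 0, 0, 0, 1;
     0, 0, 0, 0, 0, 0, 0, 0, 0, 0, 0, 0, 1, 0, 0, 0;
     0, 0, 0, 0, 0, 0, 0, 0, 0, 0, 0, 0, 0, 1, 0, 0]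
def OP21 : Matrix (Fin 16) (Fin 16) GI :=
  !![0, 0, (-⟨0,1⟩:GI), 0, 0, 0, 0, 0, 0, 0, 0, 0, 0, 0, 0, 0;
     0, 0, 0, (-⟨0,1⟩:GI), 0, 0, 0, 0, 0, 0, 0, 0, 0, 0, 0, 0;
     (⟨0,1⟩:GI), 0, 0, 0, 0, 0, 0, 0, 0, 0, 0, 0, 0, 0, 0, 0;
     0, (⟨0,1⟩:GI), 0, 0, 0, 0, 0, 0, 0, 0, 0, 0, 0, 0, 0, 0;
     0, 0, 0, 0, 0, 0, (-⟨0,1⟩:GI), 0, 0, 0, 0, 0, 0, 0, 0, 0;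
     0, 0, 0, 0, 0, 0, 0, (-⟨0,1⟩:GI), 0, 0, 0, 0, 0, 0, 0, 0;
     0, 0, 0, 0, (⟨0,1⟩:GI), 0, 0, 0, 0, 0, 0, 0, 0, 0, 0, 0;
     0, 0, 0, 0, 0, (⟨0,1⟩:GI), 0, 0, 0, 0, 0, 0, 0, 0, 0, 0;
     0, 0, 0, 0, 0, 0, 0, 0, 0, 0, (-⟨0,1⟩:GI), 0, 0, 0, 0, 0;
     0, 0, 0, 0, 0, 0, 0, 0, 0, 0, 0, (-⟨0,1⟩:GI), 0, 0, 0, 0;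
     0, 0, 0, 0, 0, 0, 0, 0, (⟨0,1⟩:GI), 0, 0, 0, 0, 0, 0, 0;
     0, 0, 0, 0, 0, 0, 0, 0, 0, (⟨0,1⟩:GI), 0, 0, 0, 0, 0, 0;
     0, 0, 0, 0, 0, 0, 0, 0, 0, 0, 0, 0, 0, 0, (-⟨0,1⟩:GI), 0;
     0, 0, 0, 0, 0, 0, 0, 0, 0, 0, 0, 0, 0, 0, 0, (-⟨0,1⟩:GI);
     0, 0, 0, 0, 0, 0, 0, 0, 0, 0, 0, 0, (⟨0,1⟩:GI), 0, 0, 0;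
     0, 0, 0, 0, 0, 0, 0, 0, 0, 0, 0, 0, 0, (⟨0,1⟩:GI), 0, 0]
def OP22 : Matrix (Fin 16) (Fin 16) GI :=
  !![1, 0, 0, 0, 0, 0, 0, 0, 0, 0, 0, 0, 0, 0, 0, 0;
     0, 1, 0, 0, 0, 0, 0, 0, 0, 0, 0, 0, 0, 0, 0, 0;
     0, 0, -1, 0, 0, 0, 0, 0, 0, 0, 0, 0, 0, 0, 0, 0;
     0, 0, 0, -1, 0, 0, 0, 0, 0, 0, 0, 0, 0, 0, 0, 0;
     0, 0, 0, 0, 1, 0, 0, 0, 0, 0, 0, 0, 0, 0, 0, 0;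
     0, 0, 0, 0, 0, 1, 0, 0, 0, 0, 0, 0, 0, 0, 0, 0;
     0, 0, 0, 0, 0, 0, -1, 0, 0, 0, 0, 0, 0, 0, 0, 0;
     0, 0, 0, 0, 0, 0, 0, -1, 0, 0, 0, 0, 0, 0, 0, 0;
     0, 0, 0, 0, 0, 0, 0, 0, 1, 0, 0, 0, 0, 0, 0, 0;
     0, 0, 0, 0, 0, 0, 0, 0, 0, 1, 0, 0, 0, 0, 0, 0;
     0, 0, 0, 0, 0, 0, 0, 0, 0, 0, -1, 0, 0, 0, 0, 0;
     0, 0, 0, 0, 0, 0, 0, 0, 0, 0, 0, -1, 0, 0, 0, 0;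
     0, 0, 0, 0, 0, 0, 0, 0, 0, 0, 0, 0, 1, 0, 0, 0;
     0, 0, 0, 0, 0, 0, 0, 0, 0, 0, 0, 0, 0, 1, 0, 0;
     0, 0, 0, 0, 0, 0, 0, 0, 0, 0, 0, 0, 0, 0, -1, 0;
     0, 0, 0, 0, 0, 0, 0, 0, 0, 0, 0, 0, 0, 0, 0, -1]
def OP30 : Matrix (Fin 16) (Fin 16) GI :=
  !![0, 1, 0, 0, 0, 0, 0, 0, 0, 0, 0, 0, 0, 0, 0, 0;
     1, 0, 0, 0, 0, 0, 0, 0, 0, 0, 0, 0, 0, 0, 0, 0;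
     0, 0, 0, 1, 0, 0, 0, 0, 0, 0, 0, 0, 0, 0, 0, 0;
     0, 0, 1, 0, 0, 0, 0, 0, 0, 0, 0, 0, 0, 0, 0, 0;
     0, 0, 0, 0, 0, 1, 0, 0, 0, 0, 0, 0, 0, 0, 0, 0;
     0, 0, 0, 0, 1, 0, 0, 0, 0, 0, 0, 0, 0, 0, 0, 0;
     0, 0, 0, 0, 0, 0, 0, 1, 0, 0, 0, 0, 0, 0, 0, 0;
     0, 0, 0, 0, 0, 0, 1, 0, 0, 0, 0, 0, 0, 0, 0, 0;
     0, 0, 0, 0, 0, 0, 0, 0, 0, 1, 0, 0, 0, 0, 0, 0;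
     0, 0, 0, 0, 0, 0, 0, 0, 1, 0, 0, 0, 0, 0, 0, 0;
     0, 0, 0, 0, 0, 0, 0, 0, 0, 0, 0, 1, 0, 0, 0, 0;
     0, 0, 0, 0, 0, 0, 0, 0, 0, 0, 1, 0, 0, 0, 0, 0;
     0, 0, 0, 0, 0, 0, 0, 0, 0, 0, 0, 0, 0, 1, 0, 0;
     0, 0, 0, 0, 0, 0, 0, 0, 0, 0, 0, 0, 1, 0, 0, 0;
     0, 0, 0, 0, 0, 0, 0, 0, 0, 0, 0, 0, 0, 0, 0, 1;
     0, 0, 0, 0, 0, 0, 0, 0, 0, 0, 0, 0, 0, 0, 1, 0]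
def OP31 : Matrix (Fin 16) (Fin 16) GI :=
  !![0, (-⟨0,1⟩:GI), 0, 0, 0, 0, 0, 0, 0, 0, 0, 0, 0, 0, 0, 0;
     (⟨0,1⟩:GI), 0, 0, 0, 0, 0, 0, 0, 0, 0, 0, 0, 0, 0, 0, 0;
     0, 0, 0, (-⟨0,1⟩:GI), 0, 0, 0, 0, 0, 0, 0, 0, 0, 0, 0, 0;
     0, 0, (⟨0,1⟩:GI), 0, 0, 0, 0, 0, 0, 0, 0, 0, 0, 0, 0, 0;
     0, 0, 0, 0, 0, (-⟨0,1⟩:GI), 0, 0, 0, 0, 0, 0, 0, 0, 0, 0;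
     0, 0, 0, 0, (⟨0,1⟩:GI), 0, 0, 0, 0, 0, 0, 0, 0, 0, 0, 0;
     0, 0, 0, 0, 0, 0, 0, (-⟨0,1⟩:GI), 0, 0, 0, 0, 0, 0, 0, 0;
     0, 0, 0, 0, 0, 0, (⟨0,1⟩:GI), 0, 0, 0, 0, 0, 0, 0, 0, 0;
     0, 0, 0, 0, 0, 0, 0, 0, 0, (-⟨0,1⟩:GI), 0, 0, 0, 0, 0, 0;
     0, 0, 0, 0, 0, 0, 0, 0, (⟨0,1⟩:GI), 0, 0, 0, 0, 0, 0, 0;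
     0, 0, 0, 0, 0, 0, 0, 0, 0, 0, 0, (-⟨0,1⟩:GI), 0, 0, 0, 0;
     0, 0, 0, 0, 0, 0, 0, 0, 0, 0, (⟨0,1⟩:GI), 0, 0, 0, 0, 0;
     0, 0, 0, 0, 0, 0, 0, 0, 0, 0, 0, 0, 0, (-⟨0,1⟩:GI), 0, 0;
     0, 0, 0, 0, 0, 0, 0, 0, 0, 0, 0, 0, (⟨0,1⟩:GI), 0, 0, 0;
     0, 0, 0, 0, 0, 0, 0, 0, 0, 0, 0, 0, 0, 0, 0, (-⟨0,1⟩:GI);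
     0, 0, 0, 0, 0, 0, 0, 0, 0, 0, 0, 0, 0, 0, (⟨0,1⟩:GI), 0]
def OP32 : Matrix (Fin 16) (Fin 16) GI :=
  !![1, 0, 0, 0, 0, 0, 0, 0, 0, 0, 0, 0, 0, 0, 0, 0;
     0, -1, 0, 0, 0, 0, 0, 0, 0, 0, 0, 0, 0, 0, 0, 0;
     0, 0, 1, 0, 0, 0, 0, 0, 0, 0, 0, 0, 0, 0, 0, 0;
     0, 0, 0, -1, 0, 0, 0, 0, 0, 0, 0, 0, 0, 0, 0, 0;
     0, 0, 0, 0, 1, 0, 0, 0, 0, 0, 0, 0, 0, 0, 0, 0;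
     0, 0, 0, 0, 0, -1, 0, 0, 0, 0, 0, 0, 0, 0, 0, 0;
     0, 0, 0, 0, 0, 0, 1, 0, 0, 0, 0, 0, 0, 0, 0, 0;
     0, 0, 0, 0, 0, 0, 0, -1, 0, 0, 0, 0, 0, 0, 0, 0;
     0, 0, 0, 0, 0, 0, 0, 0, 1, 0, 0, 0, 0, 0, 0, 0;
     0, 0, 0, 0, 0, 0, 0, 0, 0, -1, 0, 0, 0, 0, 0, 0;
     0, 0, 0, 0, 0, 0, 0, 0, 0, 0, 1, 0, 0, 0, 0, 0;
     0, 0, 0, 0, 0, 0, 0, 0, 0, 0, 0, -1, 0, 0, 0, 0;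
     0, 0, 0, 0, 0, 0, 0, 0, 0, 0, 0, 0, 1, 0, 0, 0;
     0, 0, 0, 0, 0, 0, 0, 0, 0, 0, 0, 0, 0, -1, 0, 0;
     0, 0, 0, 0, 0, 0, 0, 0, 0, 0, 0, 0, 0, 0, 1, 0;
     0, 0, 0, 0, 0, 0, 0, 0, 0, 0, 0, 0, 0, 0, 0, -1]
def S01 : Matrix (Fin 16) (Fin 16) GI :=
  !![1, 0, 0, 0, 0, 0, 0, 0, 0, 0, 0, 0, 0, 0, 0, 0;
     0, 1, 0, 0, 0, 0, 0, 0, 0, 0, 0, 0, 0, 0, 0, 0;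
     0, 0, 1, 0, 0, 0, 0, 0, 0, 0, 0, 0, 0, 0, 0, 0;
     0, 0, 0, 1, 0, 0, 0, 0, 0, 0, 0, 0, 0, 0, 0, 0;
     0, 0, 0, 0, -1, 0, 0, 0, 2, 0, 0, 0, 0, 0, 0, 0;
     0, 0, 0, 0, 0, -1, 0, 0, 0, 2, 0, 0, 0, 0, 0, 0;
     0, 0, 0, 0, 0, 0, -1, 0, 0, 0, 2, 0, 0, 0, 0, 0;
     0, 0, 0, 0, 0, 0, 0, -1, 0, 0, 0, 2, 0, 0, 0, 0;
     0, 0, 0, 0, 2, 0, 0, 0, -1, 0, 0, 0, 0, 0, 0, 0;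
     0, 0, 0, 0, 0, 2, 0, 0, 0, -1, 0, 0, 0, 0, 0, 0;
     0, 0, 0, 0, 0, 0, 2, 0, 0, 0, -1, 0, 0, 0, 0, 0;
     0, 0, 0, 0, 0, 0, 0, 2, 0, 0, 0, -1, 0, 0, 0, 0;
     0, 0, 0, 0, 0, 0, 0, 0, 0, 0, 0, 0, 1, 0, 0, 0;
     0, 0, 0, 0, 0, 0, 0, 0, 0, 0, 0, 0, 0, 1, 0, 0;
     0, 0, 0, 0, 0, 0, 0, 0, 0, 0, 0, 0, 0, 0, 1, 0;
     0, 0, 0, 0, 0, 0, 0, 0, 0, 0, 0, 0, 0, 0, 0, 1]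
def S02 : Matrix (Fin 16) (Fin 16) GI :=
  !![1, 0, 0, 0, 0, 0, 0, 0, 0, 0, 0, 0, 0, 0, 0, 0;
     0, 1, 0, 0, 0, 0, 0, 0, 0, 0, 0, 0, 0, 0, 0, 0;
     0, 0, -1, 0, 0, 0, 0, 0, 2, 0, 0, 0, 0, 0, 0, 0;
     0, 0, 0, -1, 0, 0, 0, 0, 0, 2, 0, 0, 0, 0, 0, 0;
     0, 0, 0, 0, 1, 0, 0, 0, 0, 0, 0, 0, 0, 0, 0, 0;
     0, 0, 0, 0, 0, 1, 0, 0, 0, 0, 0, 0, 0, 0, 0, 0;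
     0, 0, 0, 0, 0, 0, -1, 0, 0, 0, 0, 0, 2, 0, 0, 0;
     0, 0, 0, 0, 0, 0, 0, -1, 0, 0, 0, 0, 0, 2, 0, 0;
     0, 0, 2, 0, 0, 0, 0, 0, -1, 0, 0, 0, 0, 0, 0, 0;
     0, 0, 0, 2, 0, 0, 0, 0, 0, -1, 0, 0, 0, 0, 0, 0;
     0, 0, 0, 0, 0, 0, 0, 0, 0, 0, 1, 0, 0, 0, 0, 0;
     0, 0, 0, 0, 0, 0, 0, 0, 0, 0, 0, 1, 0, 0, 0, 0;
     0, 0, 0, 0, 0, 0, 2, 0, 0, 0, 0, 0, -1, 0, 0, 0;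
     0, 0, 0, 0, 0, 0, 0, 2, 0, 0, 0, 0, 0, -1, 0, 0;
     0, 0, 0, 0, 0, 0, 0, 0, 0, 0, 0, 0, 0, 0, 1, 0;
     0, 0, 0, 0, 0, 0, 0, 0, 0, 0, 0, 0, 0, 0, 0, 1]
def S03 : Matrix (Fin 16) (Fin 16) GI :=
  !![1, 0, 0, 0, 0, 0, 0, 0, 0, 0, 0, 0, 0, 0, 0, 0;
     0, -1, 0, 0, 0, 0, 0, 0, 2, 0, 0, 0, 0, 0, 0, 0;
     0, 0, 1, 0, 0, 0, 0, 0, 0, 0, 0, 0, 0, 0, 0, 0;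
     0, 0, 0, -1, 0, 0, 0, 0, 0, 0, 2, 0, 0, 0, 0, 0;
     0, 0, 0, 0, 1, 0, 0, 0, 0, 0, 0, 0, 0, 0, 0, 0;
     0, 0, 0, 0, 0, -1, 0, 0, 0, 0, 0, 0, 2, 0, 0, 0;
     0, 0, 0, 0, 0, 0, 1, 0, 0, 0, 0, 0, 0, 0, 0, 0;
     0, 0, 0, 0, 0, 0, 0, -1, 0, 0, 0, 0, 0, 0, 2, 0;
     0, 2, 0, 0, 0, 0, 0, 0, -1, 0, 0, 0, 0, 0, 0, 0;
     0, 0, 0, 0, 0, 0, 0, 0, 0, 1, 0, 0, 0, 0, 0, 0;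
     0, 0, 0, 2, 0, 0, 0, 0, 0, 0, -1, 0, 0, 0, 0, 0;
     0, 0, 0, 0, 0, 0, 0, 0, 0, 0, 0, 1, 0, 0, 0, 0;
     0, 0, 0, 0, 0, 2, 0, 0, 0, 0, 0, 0, -1, 0, 0, 0;
     0, 0, 0, 0, 0, 0, 0, 0, 0, 0, 0, 0, 0, 1, 0, 0;
     0, 0, 0, 0, 0, 0, 0, 2, 0, 0, 0, 0, 0, 0, -1, 0;
     0, 0, 0, 0, 0, 0, 0, 0, 0, 0, 0, 0, 0, 0, 0, 1]
def S12 : Matrix (Fin 16) (Fin 16) GI :=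
  !![1, 0, 0, 0, 0, 0, 0, 0, 0, 0, 0, 0, 0, 0, 0, 0;
     0, 1, 0, 0, 0, 0, 0, 0, 0, 0, 0, 0, 0, 0, 0, 0;
     0, 0, -1, 0, 2, 0, 0, 0, 0, 0, 0, 0, 0, 0, 0, 0;
     0, 0, 0, -1, 0, 2, 0, 0, 0, 0, 0, 0, 0, 0, 0, 0;
     0, 0, 2, 0, -1, 0, 0, 0, 0, 0, 0, 0, 0, 0, 0, 0;
     0, 0, 0, 2, 0, -1, 0, 0, 0, 0, 0, 0, 0, 0, 0, 0;
     0, 0, 0, 0, 0, 0, 1, 0, 0, 0, 0, 0, 0, 0, 0, 0;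
     0, 0, 0, 0, 0, 0, 0, 1, 0, 0, 0, 0, 0, 0, 0, 0;
     0, 0, 0, 0, 0, 0, 0, 0, 1, 0, 0, 0, 0, 0, 0, 0;
     0, 0, 0, 0, 0, 0, 0, 0, 0, 1, 0, 0, 0, 0, 0, 0;
     0, 0, 0, 0, 0, 0, 0, 0, 0, 0, -1, 0, 2, 0, 0, 0;
     0, 0, 0, 0, 0, 0, 0, 0, 0, 0, 0, -1, 0, 2, 0, 0;
     0, 0, 0, 0, 0, 0, 0, 0, 0, 0, 2, 0, -1, 0, 0, 0;
     0, 0, 0, 0, 0, 0, 0, 0, 0, 0, 0, 2, 0, -1, 0, 0;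
     0, 0, 0, 0, 0, 0, 0, 0, 0, 0, 0, 0, 0, 0, 1, 0;
     0, 0, 0, 0, 0, 0, 0, 0, 0, 0, 0, 0, 0, 0, 0, 1]
def S13 : Matrix (Fin 16) (Fin 16) GI :=
  !![1, 0, 0, 0, 0, 0, 0, 0, 0, 0, 0, 0, 0, 0, 0, 0;
     0, -1, 0, 0, 2, 0, 0, 0, 0, 0, 0, 0, 0, 0, 0, 0;
     0, 0, 1, 0, 0, 0, 0, 0, 0, 0, 0, 0, 0, 0, 0, 0;
     0, 0, 0, -1, 0, 0, 2, 0, 0, 0, 0, 0, 0, 0, 0, 0;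
     0, 2, 0, 0, -1, 0, 0, 0, 0, 0, 0, 0, 0, 0, 0, 0;
     0, 0, 0, 0, 0, 1, 0, 0, 0, 0, 0, 0, 0, 0, 0, 0;
     0, 0, 0, 2, 0, 0, -1, 0, 0, 0, 0, 0, 0, 0, 0, 0;
     0, 0, 0, 0, 0, 0, 0, 1, 0, 0, 0, 0, 0, 0, 0, 0;
     0, 0, 0, 0, 0, 0, 0, 0, 1, 0, 0, 0, 0, 0, 0, 0;
     0, 0, 0, 0, 0, 0, 0, 0, 0, -1, 0, 0, 2, 0, 0, 0;
     0, 0, 0, 0, 0, 0, 0, 0, 0, 0, 1, 0, 0, 0, 0, 0;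
     0, 0, 0, 0, 0, 0, 0, 0, 0, 0, 0, -1, 0, 0, 2, 0;
     0, 0, 0, 0, 0, 0, 0, 0, 0, 2, 0, 0, -1, 0, 0, 0;
     0, 0, 0, 0, 0, 0, 0, 0, 0, 0, 0, 0, 0, 1, 0, 0;
     0, 0, 0, 0, 0, 0, 0, 0, 0, 0, 0, 2, 0, 0, -1, 0;
     0, 0, 0, 0, 0, 0, 0, 0, 0, 0, 0, 0, 0, 0, 0, 1]
def S23 : Matrix (Fin 16) (Fin 16) GI :=
  !![1, 0, 0, 0, 0, 0, 0, 0, 0, 0, 0, 0, 0, 0, 0, 0;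
     0, -1, 2, 0, 0, 0, 0, 0, 0, 0, 0, 0, 0, 0, 0, 0;
     0, 2, -1, 0, 0, 0, 0, 0, 0, 0, 0, 0, 0, 0, 0, 0;
     0, 0, 0, 1, 0, 0, 0, 0, 0, 0, 0, 0, 0, 0, 0, 0;
     0, 0, 0, 0, 1, 0, 0, 0, 0, 0, 0, 0, 0, 0, 0, 0;
     0, 0, 0, 0, 0, -1, 2, 0, 0, 0, 0, 0, 0, 0, 0, 0;
     0, 0, 0, 0, 0, 2, -1, 0, 0, 0, 0, 0, 0, 0, 0, 0;
     0, 0, 0, 0, 0, 0, 0, 1, 0, 0, 0, 0, 0, 0, 0, 0;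
     0, 0, 0, 0, 0, 0, 0, 0, 1, 0, 0, 0, 0, 0, 0, 0;
     0, 0, 0, 0, 0, 0, 0, 0, 0, -1, 2, 0, 0, 0, 0, 0;
     0, 0, 0, 0, 0, 0, 0, 0, 0, 2, -1, 0, 0, 0, 0, 0;
     0, 0, 0, 0, 0, 0, 0, 0, 0, 0, 0, 1, 0, 0, 0, 0;
     0, 0, 0, 0, 0, 0, 0, 0, 0, 0, 0, 0, 1, 0, 0, 0;
     0, 0, 0, 0, 0, 0, 0, 0, 0, 0, 0, 0, 0, -1, 2, 0;
     0, 0, 0, 0, 0, 0, 0, 0, 0, 0, 0, 0, 0, 2, -1, 0;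
     0, 0, 0, 0, 0, 0, 0, 0, 0, 0, 0, 0, 0, 0, 0, 1]

set_option maxHeartbeats 1000000 in
lemma opAtG_00 : opAtG 0 (pauliG 0) = toBigG OP00 := by decide
set_option maxHeartbeats 1000000 in
lemma opAtG_01 : opAtG 0 (pauliG 1) = toBigG OP01 := by decide
set_option maxHeartbeats 1000000 in
lemma opAtG_02 : opAtG 0 (pauliG 2) = toBigG OP02 := by decide
set_option maxHeartbeats 1000000 in
lemma opAtG_10 : opAtG 1 (pauliG 0) = toBigG OP10 := by decide
set_option maxHeartbeats 1000000 in
lemma opAtG_11 : opAtG 1 (pauliG 1) = toBigG OP11 := by decide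
set_option maxHeartbeats 1000000 in
lemma opAtG_12 : opAtG 1 (pauliG 2) = toBigG OP12 := by decide
set_option maxHeartbeats 1000000 in
lemma opAtG_20 : opAtG 2 (pauliG 0) = toBigG OP20 := by decide
set_option maxHeartbeats 1000000 in
lemma opAtG_21 : opAtG 2 (pauliG 1) = toBigG OP21 := by decide
set_option maxHeartbeats 1000000 in
lemma opAtG_22 : opAtG 2 (pauliG 2) = toBigG OP22 := by decide
set_option maxHeartbeats 1000000 in
lemma opAtG_30 : opAtG 3 (pauliG 0) = toBigG OP30 := by decide
set_option maxHeartbeats 1000000 in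
lemma opAtG_31 : opAtG 3 (pauliG 1) = toBigG OP31 := by decide
set_option maxHeartbeats 1000000 in
lemma opAtG_32 : opAtG 3 (pauliG 2) = toBigG OP32 := by decide

set_option maxHeartbeats 4000000 in
lemma Ssum_01 : OP00 * OP10 + OP01 * OP11 + OP02 * OP12 = S01 := by decide

lemma sdotG_01 : sdotG 0 1 = toBigG S01 := by
  rw [sdotG, Fin.sum_univ_three, opAtG_00, opAtG_10, opAtG_01, opAtG_11,
      opAtG_02, opAtG_12]
  simp only [show ∀ A B : Matrix (Fin 16) (Fin 16) GI, toBigG A * toBigG B = toBigG (A * B) from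
        fun A B => Matrix.submatrix_mul_equiv A B encE encE encE,
      show ∀ A B : Matrix (Fin 16) (Fin 16) GI, toBigG A + toBigG B = toBigG (A + B) from
        fun A B => rfl]
  rw [Ssum_01]
set_option maxHeartbeats 4000000 in
lemma Ssum_02 : OP00 * OP20 + OP01 * OP21 + OP02 * OP22 = S02 := by decide

lemma sdotG_02 : sdotG 0 2 = toBigG S02 := by
  rw [sdotG, Fin.sum_univ_three, opAtG_00, opAtG_20, opAtG_01, opAtG_21,
      opAtG_02, opAtG_22]
  simp only [show ∀ A B : Matrix (Fin 16) (Fin 16) GI, toBigG A * toBigG B = toBigG (A * B) from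
        fun A B => Matrix.submatrix_mul_equiv A B encE encE encE,
      show ∀ A B : Matrix (Fin 16) (Fin 16) GI, toBigG A + toBigG B = toBigG (A + B) from
        fun A B => rfl]
  rw [Ssum_02]
set_option maxHeartbeats 4000000 in
lemma Ssum_03 : OP00 * OP30 + OP01 * OP31 + OP02 * OP32 = S03 := by decide

lemma sdotG_03 : sdotG 0 3 = toBigG S03 := by
  rw [sdotG, Fin.sum_univ_three, opAtG_00, opAtG_30, opAtG_01, opAtG_31,
      opAtG_02, opAtG_32]
  simp only [show ∀ A B : Matrix (Fin 16) (Fin 16) GI, toBigG A * toBigG B = toBigG (A * B) from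
        fun A B => Matrix.submatrix_mul_equiv A B encE encE encE,
      show ∀ A B : Matrix (Fin 16) (Fin 16) GI, toBigG A + toBigG B = toBigG (A + B) from
        fun A B => rfl]
  rw [Ssum_03]
set_option maxHeartbeats 4000000 in
lemma Ssum_12 : OP10 * OP20 + OP11 * OP21 + OP12 * OP22 = S12 := by decide

lemma sdotG_12 : sdotG 1 2 = toBigG S12 := by
  rw [sdotG, Fin.sum_univ_three, opAtG_10, opAtG_20, opAtG_11, opAtG_21,
      opAtG_12, opAtG_22]
  simp only [show ∀ A B : Matrix (Fin 16) (Fin 16) GI, toBigG A * toBigG B = toBigG (A * B) from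
        fun A B => Matrix.submatrix_mul_equiv A B encE encE encE,
      show ∀ A B : Matrix (Fin 16) (Fin 16) GI, toBigG A + toBigG B = toBigG (A + B) from
        fun A B => rfl]
  rw [Ssum_12]
set_option maxHeartbeats 4000000 in
lemma Ssum_13 : OP10 * OP30 + OP11 * OP31 + OP12 * OP32 = S13 := by decide

lemma sdotG_13 : sdotG 1 3 = toBigG S13 := by
  rw [sdotG, Fin.sum_univ_three, opAtG_10, opAtG_30, opAtG_11, opAtG_31,
      opAtG_12, opAtG_32]
  simp only [show ∀ A B : Matrix (Fin 16) (Fin 16) GI, toBigG A * toBigG B = toBigG (A * B) from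
        fun A B => Matrix.submatrix_mul_equiv A B encE encE encE,
      show ∀ A B : Matrix (Fin 16) (Fin 16) GI, toBigG A + toBigG B = toBigG (A + B) from
        fun A B => rfl]
  rw [Ssum_13]
set_option maxHeartbeats 4000000 in
lemma Ssum_23 : OP20 * OP30 + OP21 * OP31 + OP22 * OP32 = S23 := by decide

lemma sdotG_23 : sdotG 2 3 = toBigG S23 := by
  rw [sdotG, Fin.sum_univ_three, opAtG_20, opAtG_30, opAtG_21, opAtG_31,
      opAtG_22, opAtG_32]
  simp only [show ∀ A B : Matrix (Fin 16) (Fin 16) GI, toBigG A * toBigG B = toBigG (A * B) from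
        fun A B => Matrix.submatrix_mul_equiv A B encE encE encE,
      show ∀ A B : Matrix (Fin 16) (Fin 16) GI, toBigG A + toBigG B = toBigG (A + B) from
        fun A B => rfl]
  rw [Ssum_23]

def Qlit : Matrix (Fin 16) (Fin 16) GI :=
  !![48, 0, 0, 0, 0, 0, 0, 0, 0, 0, 0, 0, 0, 0, 0, 0;
     0, 12, 12, 0, 12, 0, 0, 0, 12, 0, 0, 0, 0, 0, 0, 0;
     0, 12, 12, 0, 12, 0, 0, 0, 12, 0, 0, 0, 0, 0, 0, 0;
     0, 0, 0, 8, 0, 8, 8, 0, 0, 8, 8, 0, 8, 0, 0, 0;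
     0, 12, 12, 0, 12, 0, 0, 0, 12, 0, 0, 0, 0, 0, 0, 0;
     0, 0, 0, 8, 0, 8, 8, 0, 0, 8, 8, 0, 8, 0, 0, 0;
     0, 0, 0, 8, 0, 8, 8, 0, 0, 8, 8, 0, 8, 0, 0, 0;
     0, 0, 0, 0, 0, 0, 0, 12, 0, 0, 0, 12, 0, 12, 12, 0;
     0, 12, 12, 0, 12, 0, 0, 0, 12, 0, 0, 0, 0, 0, 0, 0;
     0, 0, 0, 8, 0, 8, 8, 0, 0, 8, 8, 0, 8, 0, 0, 0;
     0, 0, 0, 8, 0, 8, 8, 0, 0, 8, 8, 0, 8, 0, 0, 0;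
     0, 0, 0, 0, 0, 0, 0, 12, 0, 0, 0, 12, 0, 12, 12, 0;
     0, 0, 0, 8, 0, 8, 8, 0, 0, 8, 8, 0, 8, 0, 0, 0;
     0, 0, 0, 0, 0, 0, 0, 12, 0, 0, 0, 12, 0, 12, 12, 0;
     0, 0, 0, 0, 0, 0, 0, 12, 0, 0, 0, 12, 0, 12, 12, 0;
     0, 0, 0, 0, 0, 0, 0, 0, 0, 0, 0, 0, 0, 0, 0, 48]

def Qbig : Matrix (Fin 16) (Fin 16) GI :=
  (15 : GI) • 1 + (5 : GI) • (S01 + S02 + S03 + S12 + S13 + S23)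
    + (S01 * S23 + S02 * S13 + S03 * S12)

set_option maxHeartbeats 2000000 in
theorem Qbig_eq : Qbig = Qlit := by decide

set_option maxHeartbeats 2000000 in
theorem Qlit_sq : Qlit * Qlit = (48 : GI) • Qlit := by decide

noncomputable abbrev φC : GI →+* ℂ := GaussianInt.toComplex

lemma map_pauliG (a : Fin 3) : (pauliG a).map φC = pauli a := by
  fin_cases a <;> ext i j <;> fin_cases i <;> fin_cases j <;>
    simp [pauliG, pauli, GaussianInt.toComplex_def, Complex.ext_iff]

lemma map_opAtG (i : Fin 4) (A : Matrix (Fin 2) (Fin 2) GI) :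
    (opAtG i A).map φC = opAt i (A.map φC) := by
  ext f g
  simp only [opAtG, opAt, Matrix.map_apply, Matrix.of_apply, map_prod]
  refine Finset.prod_congr rfl fun k _ => ?_
  split_ifs <;> simp [Matrix.map_apply]

lemma map_sdotG (i j : Fin 4) : (sdotG i j).map φC = sdot i j := by
  have hmapsum : ∀ (F : Fin 3 → Matrix (Fin 4 → Fin 2) (Fin 4 → Fin 2) GI),
      (∑ a : Fin 3, F a).map φC = ∑ a : Fin 3, (F a).map φC := by
    intro F; ext f g; simp [Matrix.map_apply, Matrix.sum_apply, map_sum]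
  rw [sdotG, hmapsum, sdot]
  refine Finset.sum_congr rfl fun a _ => ?_
  rw [Matrix.map_mul, map_opAtG, map_opAtG, map_pauliG]

/-- The complex 16×16 → big reindexing of a mapped literal. -/
noncomputable def toC (M : Matrix (Fin 16) (Fin 16) GI) :
    Matrix (Fin 4 → Fin 2) (Fin 4 → Fin 2) ℂ :=
  (M.map φC).submatrix encE encE

lemma toC_mul (M N : Matrix (Fin 16) (Fin 16) GI) :
    toC M * toC N = toC (M * N) := by
  unfold toC
  rw [Matrix.map_mul, Matrix.submatrix_mul_equiv]

lemma toC_add (M N : Matrix (Fin 16) (Fin 16) GI) :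
    toC (M + N) = toC M + toC N := by
  ext f g; simp [toC, Matrix.map_apply]

lemma toC_gsmul (c : ℤ) (M : Matrix (Fin 16) (Fin 16) GI) :
    toC ((c : GI) • M) = (c : ℂ) • toC M := by
  ext f g
  simp [toC, Matrix.map_apply, smul_eq_mul]

lemma toC_one : toC 1 = 1 := by
  unfold toC
  rw [Matrix.map_one φC (map_zero φC) (map_one φC), Matrix.submatrix_one_equiv]



lemma sdotC (i j : Fin 4) (L : Matrix (Fin 16) (Fin 16) GI) (h : sdotG i j = toBigG L) :
    sdot i j = toC L := by
  rw [← map_sdotG, h]; rfl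

theorem Pparam_aklt_proj :
    Pparam (1/3) (1/15) * Pparam (1/3) (1/15) = (48/15 : ℂ) • Pparam (1/3) (1/15) := by
  have h01 := sdotC 0 1 S01 sdotG_01
  have h02 := sdotC 0 2 S02 sdotG_02
  have h03 := sdotC 0 3 S03 sdotG_03
  have h12 := sdotC 1 2 S12 sdotG_12
  have h13 := sdotC 1 3 S13 sdotG_13
  have h23 := sdotC 2 3 S23 sdotG_23
  have hQ : toC Qlit = (15 : ℂ) • 1
      + (5 : ℂ) • (toC S01 + toC S02 + toC S03 + toC S12 + toC S13 + toC S23)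
      + (toC S01 * toC S23 + toC S02 * toC S13 + toC S03 * toC S12) := by
    rw [← Qbig_eq, Qbig]
    rw [show ((15 : GI) • (1 : Matrix (Fin 16) (Fin 16) GI)) = ((15 : ℤ) : GI) • 1 by norm_num,
        show ((5 : GI) • (S01 + S02 + S03 + S12 + S13 + S23)) = ((5 : ℤ) : GI) • (S01 + S02 + S03 + S12 + S13 + S23) by norm_num]
    simp only [toC_add, toC_gsmul, toC_one, ← toC_mul]
    norm_num
  have hP : Pparam (1/3) (1/15) = (1/15 : ℂ) • toC Qlit := by
    rw [Pparam, h01, h02, h03, h12, h13, h23, hQ]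
    module
  have hQQ : toC Qlit * toC Qlit = (48 : ℂ) • toC Qlit := by
    rw [toC_mul, Qlit_sq,
        show ((48 : GI) • Qlit) = ((48 : ℤ) : GI) • Qlit by norm_num, toC_gsmul]
    norm_num
  rw [hP, smul_mul_smul_comm, hQQ, smul_smul, smul_smul]
  norm_num
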